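/- Let φ : [0,∞) → [0,∞) be an increasing, convex, non-constant function and let α > 1. Then the set E = { t ≥ 0 : ln(∫_t^∞ e^{-φ(r)} dr) < -α·φ(t) } has finite Lebesgue measure. -/

import Mathlib

open MeasureTheory Filter Set

theorem stmt3 (φ : ℝ → ℝ)
    (hmono : MonotoneOn φ (Set.Ici 0))
    (hconv : ConvexOn ℝ (Set.Ici 0) φ)
    (hnonneg : ∀ t ∈ Set.Ici (0 : ℝ), 0 ≤ φ t)
    (hnc : ∃ s t : ℝ, 0 ≤ s ∧ 0 ≤ t ∧ φ s ≠ φ t)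
    (α : ℝ) (hα : 1 < α) :
    volume {t : ℝ | 0 ≤ t ∧ Real.log (∫ r in Set.Ioi t, Real.exp (-φ r)) < -α * φ t} < ⊤ := by
  obtain ⟨a, b, ha, hab, hfab⟩ : ∃ a b : ℝ, 0 ≤ a ∧ a < b ∧ φ a < φ b := by
    obtain ⟨a, b, ha, hb, hab⟩ := hnc
    rcases lt_trichotomy a b with h | h | h
    · exact ⟨a, b, ha, h, lt_of_le_of_ne (hmono ha hb h.le) hab⟩
    · exact absurd (by rw [h]) hab
    · exact ⟨b, a, hb, h, lt_of_le_of_ne (hmono hb ha h.le) (Ne.symm hab)⟩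
  set m := (φ b - φ a) / (b - a) with hm
  have hm0 : 0 < m := div_pos (by linarith) (by linarith)
  have hb0 : (0:ℝ) ≤ b := ha.trans hab.le
  have hgrow : ∀ x, b ≤ x → φ b + m * (x - b) ≤ φ x := by
    intro x hx
    rcases eq_or_lt_of_le hx with rfl | hx
    · simp
    · have hs := hconv.slope_mono_adjacent (mem_Ici.2 ha) (mem_Ici.2 (hb0.trans hx.le)) hab hx
      rw [div_le_div_iff₀ (by linarith) (by linarith)] at hs
      have : m * (x - b) ≤ φ x - φ b := by
        rw [hm, div_mul_eq_mul_div, div_le_iff₀ (by linarith)]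
        nlinarith
      linarith
  have hcont : ContinuousOn φ (Ioi 0) := by
    have := hconv.continuousOn_interior
    rwa [interior_Ici] at this
  -- integrability
  have hint : ∀ t : ℝ, 0 ≤ t → IntegrableOn (fun r => Real.exp (-φ r)) (Ioi t) := by
    intro t ht
    have hsub : Ioi t ⊆ Ioi (0:ℝ) := fun x hx => lt_of_le_of_lt ht hx
    have hmeas : ∀ s : Set ℝ, s ⊆ Ioi t → MeasurableSet s →
        AEStronglyMeasurable (fun r => Real.exp (-φ r)) (volume.restrict s) := by
      intro s hs hsm
      exact (Real.continuous_exp.comp_continuousOn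
        ((hcont.mono (hs.trans hsub)).neg)).aestronglyMeasurable hsm
    have : Ioi t = Ioc t (max t b) ∪ Ioi (max t b) := (Ioc_union_Ioi_eq_Ioi (le_max_left _ _)).symm
    rw [this]
    apply IntegrableOn.union
    · apply Integrable.mono (integrable_const (1:ℝ)) (hmeas _ Ioc_subset_Ioi_self measurableSet_Ioc)
      filter_upwards [ae_restrict_mem measurableSet_Ioc] with x hx
      rw [Real.norm_eq_abs, Real.abs_exp, norm_one]
      exact Real.exp_le_one_iff.mpr (neg_nonpos.2 (hnonneg x (ht.trans hx.1.le)))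
    · apply Integrable.mono ((exp_neg_integrableOn_Ioi (max t b) hm0).const_mul
        (Real.exp (-φ b + m * b))) (hmeas _ (Ioi_subset_Ioi (le_max_left _ _)) measurableSet_Ioi)
      filter_upwards [ae_restrict_mem measurableSet_Ioi] with x hx
      rw [Real.norm_eq_abs, Real.abs_exp, Real.norm_eq_abs]
      have hbx : b ≤ x := (le_max_right t b).trans hx.le
      have := hgrow x hbx
      rw [abs_of_nonneg (by positivity : (0:ℝ) ≤ Real.exp (-φ b + m * b) * Real.exp (-m * x)),
        ← Real.exp_add]
      apply Real.exp_le_exp.2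
      linarith
  set E : Set ℝ :=
    {t : ℝ | 0 ≤ t ∧ Real.log (∫ r in Set.Ioi t, Real.exp (-φ r)) < -α * φ t} with hEdef
  -- key clustering lemma
  have key : ∀ t ∈ E, 0 < t → ∀ t' ∈ E, φ t' < φ t + 1 →
      t' < t + Real.exp (1 - (α - 1) * φ t) := by
    rintro t ⟨-, htE⟩ ht0 t' ⟨ht'0, -⟩ ht'
    have hφt : 0 ≤ φ t := hnonneg t ht0.le
    set c : ℝ := max 0 ((φ t + 1 - φ b) / m) with hc
    set M : ℝ := max t (b + c) with hM
    have htM : t ≤ M := le_max_left _ _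
    have hbM : b ≤ M := le_trans (by simp [hc, le_max_left]) (le_max_right t (b + c))
    have hMc : b + c ≤ M := le_max_right _ _
    have hφM : φ t + 1 ≤ φ M := by
      have h1 := hgrow M hbM
      have h2 : (φ t + 1 - φ b) / m ≤ c := le_max_right _ _
      have h3 : φ t + 1 - φ b ≤ m * c := by
        rw [div_le_iff₀ hm0] at h2; linarith [h2]
      have h4 : m * c ≤ m * (M - b) := by
        apply mul_le_mul_of_nonneg_left _ hm0.le; linarith
      linarith
    obtain ⟨u, huI, hu⟩ := intermediate_value_Icc htM
      (hcont.mono (fun x hx => lt_of_lt_of_le ht0 hx.1))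
      (⟨by linarith, hφM⟩ : φ t + 1 ∈ Icc (φ t) (φ M))
    have htu : t ≤ u := huI.1
    have hu0 : 0 < u := lt_of_lt_of_le ht0 htu
    have hInn : 0 ≤ ∫ r in Set.Ioi t, Real.exp (-φ r) :=
      setIntegral_nonneg measurableSet_Ioi (fun x _ => (Real.exp_pos _).le)
    have hIpos : 0 < ∫ r in Set.Ioi t, Real.exp (-φ r) := by
      rcases hInn.lt_or_eq with h | h
      · exact h
      · exfalso
        rw [← h, Real.log_zero] at htE
        nlinarith
    have hIub : (∫ r in Set.Ioi t, Real.exp (-φ r)) < Real.exp (-α * φ t) :=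
      (Real.log_lt_iff_lt_exp hIpos).mp htE
    have hI1 : (u - t) * Real.exp (-(φ t + 1)) ≤ ∫ r in Ioc t u, Real.exp (-φ r) := by
      have hconst : (∫ _ in Ioc t u, Real.exp (-(φ t + 1))) = (u - t) * Real.exp (-(φ t + 1)) := by
        rw [setIntegral_const, Real.volume_real_Ioc_of_le (by linarith), smul_eq_mul]
      rw [← hconst]
      apply setIntegral_mono_on (integrableOn_const measure_Ioc_lt_top.ne)
        (((hint t ht0.le)).mono_set Ioc_subset_Ioi_self) measurableSet_Ioc
      intro x hx
      apply Real.exp_le_exp.2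
      have : φ x ≤ φ u := hmono (mem_Ici.2 (ht0.le.trans hx.1.le)) (mem_Ici.2 hu0.le) hx.2
      rw [hu] at this
      linarith
    have hI2 : (∫ r in Ioc t u, Real.exp (-φ r)) ≤ ∫ r in Set.Ioi t, Real.exp (-φ r) := by
      apply setIntegral_mono_set (hint t ht0.le)
        (Eventually.of_forall (fun x => (Real.exp_pos _).le))
        (HasSubset.Subset.eventuallyLE Ioc_subset_Ioi_self)
    have hut : u - t < Real.exp (1 - (α - 1) * φ t) := by
      have h1 : (u - t) * Real.exp (-(φ t + 1)) < Real.exp (-α * φ t) := by linarith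
      have h2 : Real.exp (1 - (α - 1) * φ t) = Real.exp (-α * φ t) * Real.exp (φ t + 1) := by
        rw [← Real.exp_add]; ring_nf
      rw [h2]
      calc u - t = (u - t) * Real.exp (-(φ t + 1)) * Real.exp (φ t + 1) := by
            rw [mul_assoc, ← Real.exp_add, neg_add_cancel, Real.exp_zero, mul_one]
        _ < Real.exp (-α * φ t) * Real.exp (φ t + 1) := by
            exact mul_lt_mul_of_pos_right h1 (Real.exp_pos _)
    have ht'u : t' < u := by
      by_contra h
      push_neg at h
      have := hmono (mem_Ici.2 hu0.le) (mem_Ici.2 ht'0) h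
      rw [hu] at this
      linarith
    linarith
  -- covering and summation
  have hE0 : ∀ t ∈ E, 0 ≤ t := fun t ht => ht.1
  set δ : ℕ → ℝ := fun n => Real.exp (1 - (α - 1) * n) with hδ
  set B : ℕ → Set ℝ := fun n => {t ∈ E | 0 < t ∧ (n : ℝ) ≤ φ t ∧ φ t < n + 1} with hB
  have cover : E ⊆ insert 0 (⋃ n, B n) := by
    intro t ht
    rcases (hE0 t ht).lt_or_eq with h | h
    · right
      have hφ : 0 ≤ φ t := hnonneg t (hE0 t ht)
      exact mem_iUnion.2 ⟨⌊φ t⌋₊, ht, h, Nat.floor_le hφ, Nat.lt_floor_add_one _⟩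
    · exact Or.inl h.symm
  have hBn : ∀ n : ℕ, volume (B n) ≤ ENNReal.ofReal (2 * δ n) := by
    intro n
    rcases eq_empty_or_nonempty (B n) with h | ⟨t₀, ht₀⟩
    · simp [h]
    obtain ⟨ht₀E, ht₀p, ht₀l, ht₀u⟩ := ht₀
    have hsub : B n ⊆ Ioo (t₀ - δ n) (t₀ + δ n) := by
      rintro t ⟨htE, htp, htl, htu⟩
      have hd : ∀ s : ℝ, (n:ℝ) ≤ φ s → Real.exp (1 - (α - 1) * φ s) ≤ δ n := by
        intro s hs
        apply Real.exp_le_exp.2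
        have : (α - 1) * (n:ℝ) ≤ (α - 1) * φ s := mul_le_mul_of_nonneg_left hs (by linarith)
        linarith
      constructor
      · have h1 := key t htE htp t₀ ht₀E (by linarith)
        have := hd t htl
        linarith
      · have h1 := key t₀ ht₀E ht₀p t htE (by linarith)
        have := hd t₀ ht₀l
        linarith
    calc volume (B n) ≤ volume (Ioo (t₀ - δ n) (t₀ + δ n)) := measure_mono hsub
      _ = ENNReal.ofReal (2 * δ n) := by rw [Real.volume_Ioo]; ring_nf
  have hsum : ∑' n : ℕ, ENNReal.ofReal (2 * δ n) < ⊤ := by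
    have hrepr : ∀ n : ℕ, ENNReal.ofReal (2 * δ n) =
        ENNReal.ofReal (2 * Real.exp 1) * (ENNReal.ofReal (Real.exp (-(α - 1)))) ^ n := by
      intro n
      rw [← ENNReal.ofReal_pow (Real.exp_nonneg _), ← ENNReal.ofReal_mul (by positivity)]
      congr 1
      rw [hδ, ← Real.exp_nat_mul, mul_assoc, ← Real.exp_add]
      ring_nf
    rw [tsum_congr hrepr, ENNReal.tsum_mul_left, ENNReal.tsum_geometric]
    apply ENNReal.mul_lt_top ENNReal.ofReal_lt_top
    have hr : ENNReal.ofReal (Real.exp (-(α - 1))) < 1 := by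
      rw [← ENNReal.ofReal_one]
      exact (ENNReal.ofReal_lt_ofReal_iff_of_nonneg (Real.exp_nonneg _)).2
        (Real.exp_lt_one_iff.2 (by linarith))
    exact ENNReal.inv_lt_top.2 (tsub_pos_of_lt hr)
  calc volume E ≤ volume (insert 0 (⋃ n, B n)) := measure_mono cover
    _ ≤ volume ({0} : Set ℝ) + volume (⋃ n, B n) := by
        rw [insert_eq]; exact measure_union_le _ _
    _ ≤ 0 + ∑' n, volume (B n) := by
        rw [Real.volume_singleton]; exact add_le_add le_rfl (measure_iUnion_le _)
    _ ≤ ∑' n, ENNReal.ofReal (2 * δ n) := by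
        rw [zero_add]; exact ENNReal.tsum_le_tsum hBn
    _ < ⊤ := hsum
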